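/- arXiv:1802.08956 — 3 statements merged into one kernel-verified Lean document; each statement's English description precedes it below -/
import Mathlib

section
/- Let 1 < p < ∞, 1 ≤ q ≤ ∞, and let p', q' be the conjugate exponents (1/p + 1/p' = 1, 1/q + 1/q' = 1). Then pointwise multiplication is bounded from L^{p,q} × L^{p',q'} to L^1: there is a constant C with ‖fg‖_{L^1} ≤ C ‖f‖_{L^{p,q}} ‖g‖_{L^{p',q'}}. -/
open MeasureTheory ENNReal Set

/-- Decreasing rearrangement of `‖f‖` with respect to `μ`. -/
noncomputable def rearrangement {α : Type*} [MeasurableSpace α] (μ : Measure α)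
    {E : Type*} [NNNorm E] (f : α → E) (t : ℝ) : ℝ≥0∞ :=
  sInf {s : ℝ≥0∞ | μ {x | s < (‖f x‖₊ : ℝ≥0∞)} ≤ ENNReal.ofReal t}

/-- Lorentz quasi-norm `‖f‖_{L^{p,q}(μ)} = ‖ t^{1/p-1/q} f*(t) ‖_{L^q((0,∞),dt)}`. -/
noncomputable def lorentzNorm {α : Type*} [MeasurableSpace α] (μ : Measure α)
    {E : Type*} [NNNorm E] (p q : ℝ≥0∞) (f : α → E) : ℝ≥0∞ :=
  if q = ∞ then
    ⨆ t ∈ Ioi (0 : ℝ), ENNReal.ofReal (t ^ (p.toReal⁻¹)) * rearrangement μ f t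
  else
    (∫⁻ t in Ioi (0 : ℝ),
        (ENNReal.ofReal (t ^ (p.toReal⁻¹ - q.toReal⁻¹)) * rearrangement μ f t) ^ q.toReal) ^
      q.toReal⁻¹

noncomputable def KK (a : ℝ≥0∞) (s : ℝ) : ℝ≥0∞ := if ENNReal.ofReal s < a then 1 else 0

lemma KK_eq_indicator (a : ℝ≥0∞) : KK a = {u : ℝ | ENNReal.ofReal u < a}.indicator 1 := by
  funext s
  simp [KK, Set.indicator_apply]

lemma lintegral_KK (a : ℝ≥0∞) : ∫⁻ s in Ioi (0 : ℝ), KK a s = a := by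
  have hS : MeasurableSet {u : ℝ | ENNReal.ofReal u < a} :=
    measurableSet_lt ENNReal.measurable_ofReal measurable_const
  rw [KK_eq_indicator, lintegral_indicator_one hS, Measure.restrict_apply hS]
  rcases eq_or_ne a ∞ with rfl | ha
  · have : {u : ℝ | ENNReal.ofReal u < ∞} ∩ Ioi 0 = Ioi 0 := by
      ext u; simp [ENNReal.ofReal_lt_top]
    rw [this, Real.volume_Ioi]
  · have : {u : ℝ | ENNReal.ofReal u < a} ∩ Ioi 0 = Ioo 0 a.toReal := by
      ext u
      simp only [mem_inter_iff, mem_setOf_eq, mem_Ioi, mem_Ioo]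
      constructor
      · rintro ⟨h1, h2⟩
        exact ⟨h2, (ENNReal.ofReal_lt_iff_lt_toReal h2.le ha).mp h1⟩
      · rintro ⟨h1, h2⟩
        exact ⟨(ENNReal.ofReal_lt_iff_lt_toReal h1.le ha).mpr h2, h1⟩
    rw [this, Real.volume_Ioo, sub_zero, ENNReal.ofReal_toReal ha]

lemma KK_mul (a b : ℝ≥0∞) (s : ℝ) : KK a s * KK b s = KK (min a b) s := by
  simp only [KK, lt_min_iff]
  split_ifs with h1 h2 h3 h4 h5 <;> simp_all

lemma measurable_KK (a : ℝ≥0∞) : Measurable (KK a) := by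
  rw [KK_eq_indicator]
  exact measurable_const.indicator (measurableSet_lt ENNReal.measurable_ofReal measurable_const)

lemma measurable_KK_prod {β : Type*} [MeasurableSpace β] {h : β → ℝ≥0∞} (hh : Measurable h) :
    Measurable fun p : ℝ × β => KK (h p.2) p.1 := by
  have hS : MeasurableSet {p : ℝ × β | ENNReal.ofReal p.1 < h p.2} :=
    measurableSet_lt (measurable_fst.ennreal_ofReal) (hh.comp measurable_snd)
  have : (fun p : ℝ × β => KK (h p.2) p.1)
      = {p : ℝ × β | ENNReal.ofReal p.1 < h p.2}.indicator 1 := by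
    funext p; simp [KK, Set.indicator_apply]
  rw [this]
  exact measurable_const.indicator hS

lemma lt_rearrangement_iff {α : Type*} [MeasurableSpace α] (μ : Measure α) (f : α → ℝ)
    (s : ℝ≥0∞) (t : ℝ) :
    s < rearrangement μ f t ↔ ENNReal.ofReal t < μ {x | s < (‖f x‖₊ : ℝ≥0∞)} := by
  constructor
  · intro h
    by_contra hh
    push_neg at hh
    have hmem : s ∈ {s : ℝ≥0∞ | μ {x | s < (‖f x‖₊ : ℝ≥0∞)} ≤ ENNReal.ofReal t} := hh
    exact absurd (sInf_le hmem) h.not_ge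
  · intro h
    have hs : s ≠ ∞ := by
      rintro rfl
      have : {x | (∞ : ℝ≥0∞) < (‖f x‖₊ : ℝ≥0∞)} = ∅ := by ext x; simp
      rw [this, measure_empty] at h
      exact absurd h (not_lt_of_ge zero_le)
    have hU : {x | s < (‖f x‖₊ : ℝ≥0∞)} = ⋃ n : ℕ, {x | s + (n : ℝ≥0∞)⁻¹ < (‖f x‖₊ : ℝ≥0∞)} := by
      ext x
      simp only [mem_setOf_eq, mem_iUnion]
      constructor
      · intro hx
        rcases eq_or_ne ((‖f x‖₊ : ℝ≥0∞)) ∞ with hcx | hcx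
        · exact ⟨1, by rw [hcx]; exact ENNReal.add_lt_top.mpr ⟨hs.lt_top, by simp⟩⟩
        · have hpos : 0 < (‖f x‖₊ : ℝ≥0∞) - s := tsub_pos_iff_lt.mpr hx
          obtain ⟨n, hn⟩ := ENNReal.exists_inv_nat_lt (ne_of_gt hpos)
          refine ⟨n, ?_⟩
          calc s + (n : ℝ≥0∞)⁻¹ < s + ((‖f x‖₊ : ℝ≥0∞) - s) := ENNReal.add_lt_add_left hs hn
            _ = (‖f x‖₊ : ℝ≥0∞) := add_tsub_cancel_of_le hx.le
      · rintro ⟨n, hn⟩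
        exact lt_of_le_of_lt le_self_add hn
    have hmono : Monotone fun n : ℕ => {x | s + (n : ℝ≥0∞)⁻¹ < (‖f x‖₊ : ℝ≥0∞)} := by
      intro n m hnm x hx
      refine lt_of_le_of_lt (add_le_add_right ?_ s) hx
      exact ENNReal.inv_le_inv.mpr (by exact_mod_cast Nat.cast_le.mpr hnm)
    rw [hU, hmono.measure_iUnion] at h
    obtain ⟨n, hn⟩ := lt_iSup_iff.mp h
    have hle : s + (n : ℝ≥0∞)⁻¹ ≤ rearrangement μ f t := by
      refine le_sInf fun s' hs' => ?_
      by_contra hcon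
      push_neg at hcon
      have hsub : {x | s + (n : ℝ≥0∞)⁻¹ < (‖f x‖₊ : ℝ≥0∞)} ⊆ {x | s' < (‖f x‖₊ : ℝ≥0∞)} :=
        fun x hx => lt_trans hcon hx
      exact absurd (le_trans (measure_mono hsub) hs') hn.not_ge
    exact lt_of_lt_of_le (ENNReal.lt_add_right hs (by simp)) hle

lemma rearrangement_antitone {α : Type*} [MeasurableSpace α] (μ : Measure α) (f : α → ℝ) :
    Antitone (rearrangement μ f) := fun t t' h =>
  sInf_le_sInf fun s hs => le_trans hs (ENNReal.ofReal_le_ofReal h)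

lemma rearrangement_congr {α : Type*} [MeasurableSpace α] {μ : Measure α} {f f' : α → ℝ}
    (h : f =ᵐ[μ] f') : rearrangement μ f = rearrangement μ f' := by
  funext t
  unfold rearrangement
  congr 1
  ext s
  have : μ {x | s < (‖f x‖₊ : ℝ≥0∞)} = μ {x | s < (‖f' x‖₊ : ℝ≥0∞)} := by
    apply measure_congr
    filter_upwards [h] with x hx
    show (s < (‖f x‖₊ : ℝ≥0∞)) = (s < (‖f' x‖₊ : ℝ≥0∞))
    rw [hx]
  simp [this]

lemma hardy_littlewood {α : Type*} [MeasurableSpace α] (μ : Measure α) [SigmaFinite μ]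
    (f g : α → ℝ) (hf : Measurable f) (hg : Measurable g) :
    ∫⁻ x, (‖f x‖₊ : ℝ≥0∞) * (‖g x‖₊ : ℝ≥0∞) ∂μ
      ≤ ∫⁻ t in Ioi (0 : ℝ), rearrangement μ f t * rearrangement μ g t := by
  set ν := volume.restrict (Ioi (0 : ℝ)) with hν
  set c : α → ℝ≥0∞ := fun x => (‖f x‖₊ : ℝ≥0∞) with hc
  set d : α → ℝ≥0∞ := fun x => (‖g x‖₊ : ℝ≥0∞) with hd
  set rf := rearrangement μ f with hrfdef
  set rg := rearrangement μ g with hrgdef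
  have hcm : Measurable c := hf.nnnorm.coe_nnreal_ennreal
  have hdm : Measurable d := hg.nnnorm.coe_nnreal_ennreal
  have hrf : Measurable rf := (rearrangement_antitone μ f).measurable
  have hrg : Measurable rg := (rearrangement_antitone μ g).measurable
  have hKc_s : ∀ s : ℝ, Measurable fun x => KK (c x) s := fun s =>
    (measurable_KK_prod hcm).comp (measurable_const.prodMk measurable_id)
  have hKrf_s : ∀ s : ℝ, Measurable fun t => KK (rf t) s := fun s =>
    (measurable_KK_prod hrf).comp (measurable_const.prodMk measurable_id)
  have h1 : AEMeasurable (Function.uncurry fun (x : α) (s : ℝ) => KK (c x) s * d x)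
      (μ.prod ν) := by
    apply Measurable.aemeasurable
    exact ((measurable_KK_prod hcm).comp measurable_swap).mul (hdm.comp measurable_fst)
  have h2 : ∀ s : ℝ, AEMeasurable (Function.uncurry fun (x : α) (u : ℝ) =>
      KK (c x) s * KK (d x) u) (μ.prod ν) := fun s => by
    apply Measurable.aemeasurable
    exact ((hKc_s s).comp measurable_fst).mul ((measurable_KK_prod hdm).comp measurable_swap)
  have h3 : ∀ s : ℝ, AEMeasurable (Function.uncurry fun (u t : ℝ) =>
      KK (rf t) s * KK (rg t) u) (ν.prod ν) := fun s => by
    apply Measurable.aemeasurable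
    exact ((hKrf_s s).comp measurable_snd).mul (measurable_KK_prod hrg)
  have h4 : AEMeasurable (Function.uncurry fun (s t : ℝ) => KK (rf t) s * rg t)
      (ν.prod ν) := by
    apply Measurable.aemeasurable
    exact (measurable_KK_prod hrf).mul (hrg.comp measurable_snd)
  calc ∫⁻ x, c x * d x ∂μ
      = ∫⁻ x, ∫⁻ s, KK (c x) s * d x ∂ν ∂μ := by
        refine lintegral_congr fun x => ?_
        rw [lintegral_mul_const _ (measurable_KK _), lintegral_KK]
    _ = ∫⁻ s, ∫⁻ x, KK (c x) s * d x ∂μ ∂ν := lintegral_lintegral_swap h1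
    _ = ∫⁻ s, ∫⁻ x, ∫⁻ u, KK (c x) s * KK (d x) u ∂ν ∂μ ∂ν := by
        refine lintegral_congr fun s => lintegral_congr fun x => ?_
        rw [lintegral_const_mul _ (measurable_KK _), lintegral_KK]
    _ = ∫⁻ s, ∫⁻ u, ∫⁻ x, KK (c x) s * KK (d x) u ∂μ ∂ν ∂ν := by
        refine lintegral_congr fun s => ?_
        exact lintegral_lintegral_swap (h2 s)
    _ ≤ ∫⁻ s, ∫⁻ u, ∫⁻ t, KK (rf t) s * KK (rg t) u ∂ν ∂ν ∂ν := by
        refine lintegral_mono fun s => lintegral_mono fun u => ?_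
        set A := {x | ENNReal.ofReal s < c x} with hA
        set B := {x | ENNReal.ofReal u < d x} with hB
        have hAm : MeasurableSet A := measurableSet_lt measurable_const hcm
        have hBm : MeasurableSet B := measurableSet_lt measurable_const hdm
        have hL : ∫⁻ x, KK (c x) s * KK (d x) u ∂μ = μ (A ∩ B) := by
          have hpt : (fun x => KK (c x) s * KK (d x) u) = (A ∩ B).indicator 1 := by
            funext x
            simp only [KK, Set.indicator_apply, mem_inter_iff, hA, hB, mem_setOf_eq]
            by_cases h1' : ENNReal.ofReal s < c x <;>
              by_cases h2' : ENNReal.ofReal u < d x <;> simp [h1', h2']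
          rw [hpt, lintegral_indicator_one (hAm.inter hBm)]
        have hR : ∫⁻ t, KK (rf t) s * KK (rg t) u ∂ν = min (μ A) (μ B) := by
          have hpt : ∀ t : ℝ, KK (rf t) s * KK (rg t) u = KK (min (μ A) (μ B)) t := by
            intro t
            have e1 : KK (rf t) s = KK (μ A) t := by
              simp only [KK]
              exact if_congr (lt_rearrangement_iff μ f (ENNReal.ofReal s) t) rfl rfl
            have e2 : KK (rg t) u = KK (μ B) t := by
              simp only [KK]
              exact if_congr (lt_rearrangement_iff μ g (ENNReal.ofReal u) t) rfl rfl
            rw [e1, e2, KK_mul]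
          rw [lintegral_congr hpt, lintegral_KK]
        rw [hL, hR]
        exact le_min (measure_mono inter_subset_left) (measure_mono inter_subset_right)
    _ = ∫⁻ s, ∫⁻ t, KK (rf t) s * rg t ∂ν ∂ν := by
        refine lintegral_congr fun s => ?_
        rw [lintegral_lintegral_swap (h3 s)]
        refine lintegral_congr fun t => ?_
        rw [lintegral_const_mul _ (measurable_KK _), lintegral_KK]
    _ = ∫⁻ t, ∫⁻ s, KK (rf t) s * rg t ∂ν ∂ν := lintegral_lintegral_swap h4
    _ = ∫⁻ t, rf t * rg t ∂ν := by
        refine lintegral_congr fun t => ?_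
        rw [lintegral_mul_const _ (measurable_KK _), lintegral_KK]

lemma lorentzNorm_top {α : Type*} [MeasurableSpace α] (μ : Measure α)
    {E : Type*} [NNNorm E] (p : ℝ≥0∞) (f : α → E) :
    lorentzNorm μ p ∞ f
      = ⨆ t ∈ Ioi (0 : ℝ), ENNReal.ofReal (t ^ (p.toReal⁻¹)) * rearrangement μ f t :=
  if_pos rfl

lemma lorentzNorm_ne_top {α : Type*} [MeasurableSpace α] (μ : Measure α)
    {E : Type*} [NNNorm E] (p : ℝ≥0∞) {q : ℝ≥0∞} (hq : q ≠ ∞) (f : α → E) :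
    lorentzNorm μ p q f
      = (∫⁻ t in Ioi (0 : ℝ),
          (ENNReal.ofReal (t ^ (p.toReal⁻¹ - q.toReal⁻¹)) * rearrangement μ f t) ^ q.toReal) ^
        q.toReal⁻¹ :=
  if_neg hq

lemma lorentzNorm_one {α : Type*} [MeasurableSpace α] (μ : Measure α)
    {E : Type*} [NNNorm E] (p : ℝ≥0∞) (f : α → E) :
    lorentzNorm μ p 1 f
      = ∫⁻ t in Ioi (0 : ℝ), ENNReal.ofReal (t ^ (p.toReal⁻¹ - 1)) * rearrangement μ f t := by
  rw [lorentzNorm_ne_top μ p one_ne_top f]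
  simp [ENNReal.rpow_one]


/-- pointwise multiplication is bounded from `L^{p,q} × L^{p',q'}` to `L¹`. -/
theorem lorentzNorm_mul_dual {α : Type*} [MeasurableSpace α] (μ : Measure α) [SigmaFinite μ]
    (p q p' q' : ℝ≥0∞) (hp : 1 < p) (hp' : p ≠ ∞) (hq : 1 ≤ q)
    (hpc : p⁻¹ + p'⁻¹ = 1) (hqc : q⁻¹ + q'⁻¹ = 1) :
    ∃ C : ℝ≥0∞, C < ∞ ∧ ∀ f g : α → ℝ,
      AEStronglyMeasurable f μ → AEStronglyMeasurable g μ →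
      eLpNorm (fun x => f x * g x) 1 μ ≤ C * lorentzNorm μ p q f * lorentzNorm μ p' q' g := by
  -- exponent arithmetic
  have hp0 : p ≠ 0 := (zero_lt_one.trans hp).ne'
  have hpinv_ne_top : p⁻¹ ≠ ∞ := by simp [hp0]
  have hpinv_lt_one : p⁻¹ < 1 := ENNReal.inv_lt_one.mpr hp
  have hpinv_ne_zero : p⁻¹ ≠ 0 := ENNReal.inv_ne_zero.mpr hp'
  have hp'inv_ne_zero : p'⁻¹ ≠ 0 := by
    intro h; rw [h, add_zero] at hpc; exact hpinv_lt_one.ne hpc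
  have hp'inv_ne_top : p'⁻¹ ≠ ∞ := by
    intro h; rw [h] at hpc; simp at hpc
  have hta : p.toReal⁻¹ = (p⁻¹).toReal := (ENNReal.toReal_inv p).symm
  have hta' : p'.toReal⁻¹ = (p'⁻¹).toReal := (ENNReal.toReal_inv p').symm
  have ha : 0 < p.toReal⁻¹ := by
    rw [hta]; exact ENNReal.toReal_pos hpinv_ne_zero hpinv_ne_top
  have ha' : 0 < p'.toReal⁻¹ := by
    rw [hta']; exact ENNReal.toReal_pos hp'inv_ne_zero hp'inv_ne_top
  have haa : p.toReal⁻¹ + p'.toReal⁻¹ = 1 := by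
    rw [hta, hta', ← ENNReal.toReal_add hpinv_ne_top hp'inv_ne_top, hpc, ENNReal.toReal_one]
  refine ⟨1, ENNReal.one_lt_top, fun f g hf hg => ?_⟩
  rw [one_mul]
  have hfm := hf.aemeasurable
  have hgm := hg.aemeasurable
  set f' := hfm.mk f with hf'def
  set g' := hgm.mk g with hg'def
  have hf' : Measurable f' := hfm.measurable_mk
  have hg' : Measurable g' := hgm.measurable_mk
  have hfe : f =ᵐ[μ] f' := hfm.ae_eq_mk
  have hge : g =ᵐ[μ] g' := hgm.ae_eq_mk
  have hHL : eLpNorm (fun x => f x * g x) 1 μ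
      ≤ ∫⁻ t in Ioi (0 : ℝ), rearrangement μ f t * rearrangement μ g t := by
    have h1 : eLpNorm (fun x => f x * g x) 1 μ = ∫⁻ x, (‖f' x‖₊ : ℝ≥0∞) * ‖g' x‖₊ ∂μ := by
      rw [eLpNorm_one_eq_lintegral_enorm]
      refine lintegral_congr_ae ?_
      filter_upwards [hfe, hge] with x hx hy
      rw [hx, hy, enorm_mul]; rfl
    rw [h1, rearrangement_congr hfe, rearrangement_congr hge]
    exact hardy_littlewood μ f' g' hf' hg'
  refine le_trans hHL ?_
  set rf := rearrangement μ f with hrfdef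
  set rg := rearrangement μ g with hrgdef
  have hrf : Measurable rf := (rearrangement_antitone μ f).measurable
  have hrg : Measurable rg := (rearrangement_antitone μ g).measurable
  have mf : ∀ e : ℝ, Measurable fun t : ℝ => ENNReal.ofReal (t ^ e) * rf t := fun e =>
    ((measurable_id.pow measurable_const).ennreal_ofReal).mul hrf
  have mg : ∀ e : ℝ, Measurable fun t : ℝ => ENNReal.ofReal (t ^ e) * rg t := fun e =>
    ((measurable_id.pow measurable_const).ennreal_ofReal).mul hrg
  have hq0 : q ≠ 0 := (zero_lt_one.trans_le hq).ne'
  have hof : ∀ t : ℝ, 0 < t → ∀ x y : ℝ, x + y = 0 →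
      ENNReal.ofReal (t ^ x) * ENNReal.ofReal (t ^ y) = 1 := by
    intro t ht x y hxy
    rw [← ENNReal.ofReal_mul (Real.rpow_nonneg ht.le _), ← Real.rpow_add ht, hxy,
      Real.rpow_zero, ENNReal.ofReal_one]
  by_cases hq1 : q = 1
  · -- q = 1, q' = ∞
    have hq'top : q' = ∞ := by
      rw [hq1, inv_one] at hqc
      have h0 : (1 : ℝ≥0∞) + q'⁻¹ = 1 + 0 := by rw [add_zero]; exact hqc
      exact ENNReal.inv_eq_zero.mp ((ENNReal.add_right_inj ENNReal.one_ne_top).mp h0)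
    subst hq1; subst hq'top
    rw [lorentzNorm_one, lorentzNorm_top]
    set M := ⨆ t ∈ Ioi (0 : ℝ), ENNReal.ofReal (t ^ p'.toReal⁻¹) * rg t with hM
    calc ∫⁻ t in Ioi (0 : ℝ), rf t * rg t
        ≤ ∫⁻ t in Ioi (0 : ℝ), (ENNReal.ofReal (t ^ (p.toReal⁻¹ - 1)) * rf t) * M := by
          refine lintegral_mono_ae ?_
          filter_upwards [ae_restrict_mem measurableSet_Ioi] with t ht
          have h1 : ENNReal.ofReal (t ^ (p.toReal⁻¹ - 1)) * ENNReal.ofReal (t ^ p'.toReal⁻¹)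
              = 1 := hof t ht _ _ (by linarith)
          calc rf t * rg t
              = (ENNReal.ofReal (t ^ (p.toReal⁻¹ - 1)) * ENNReal.ofReal (t ^ p'.toReal⁻¹))
                * (rf t * rg t) := by rw [h1, one_mul]
            _ = (ENNReal.ofReal (t ^ (p.toReal⁻¹ - 1)) * rf t)
                * (ENNReal.ofReal (t ^ p'.toReal⁻¹) * rg t) := by ring
            _ ≤ (ENNReal.ofReal (t ^ (p.toReal⁻¹ - 1)) * rf t) * M := by
                have hMle : ENNReal.ofReal (t ^ p'.toReal⁻¹) * rg t ≤ M :=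
                  le_biSup (fun u => ENNReal.ofReal (u ^ p'.toReal⁻¹) * rg u) ht
                exact mul_le_mul_right hMle _
      _ = (∫⁻ t in Ioi (0 : ℝ), ENNReal.ofReal (t ^ (p.toReal⁻¹ - 1)) * rf t) * M :=
          lintegral_mul_const _ (mf _)
  · by_cases hqtop : q = ∞
    · -- q = ∞, q' = 1
      have hq'1 : q' = 1 := by
        rw [hqtop] at hqc
        simp only [ENNReal.inv_top, zero_add] at hqc
        exact ENNReal.inv_eq_one.mp hqc
      subst hqtop; subst hq'1
      rw [lorentzNorm_one, lorentzNorm_top]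
      set M := ⨆ t ∈ Ioi (0 : ℝ), ENNReal.ofReal (t ^ p.toReal⁻¹) * rf t with hM
      calc ∫⁻ t in Ioi (0 : ℝ), rf t * rg t
          ≤ ∫⁻ t in Ioi (0 : ℝ), M * (ENNReal.ofReal (t ^ (p'.toReal⁻¹ - 1)) * rg t) := by
            refine lintegral_mono_ae ?_
            filter_upwards [ae_restrict_mem measurableSet_Ioi] with t ht
            have h1 : ENNReal.ofReal (t ^ p.toReal⁻¹) * ENNReal.ofReal (t ^ (p'.toReal⁻¹ - 1))
                = 1 := hof t ht _ _ (by linarith)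
            calc rf t * rg t
                = (ENNReal.ofReal (t ^ p.toReal⁻¹) * ENNReal.ofReal (t ^ (p'.toReal⁻¹ - 1)))
                  * (rf t * rg t) := by rw [h1, one_mul]
              _ = (ENNReal.ofReal (t ^ p.toReal⁻¹) * rf t)
                  * (ENNReal.ofReal (t ^ (p'.toReal⁻¹ - 1)) * rg t) := by ring
              _ ≤ M * (ENNReal.ofReal (t ^ (p'.toReal⁻¹ - 1)) * rg t) := by
                  have hMle : ENNReal.ofReal (t ^ p.toReal⁻¹) * rf t ≤ M :=
                    le_biSup (fun u => ENNReal.ofReal (u ^ p.toReal⁻¹) * rf u) ht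
                  exact mul_le_mul_left hMle _
        _ = M * ∫⁻ t in Ioi (0 : ℝ), ENNReal.ofReal (t ^ (p'.toReal⁻¹ - 1)) * rg t :=
            lintegral_const_mul _ (mg _)
    · -- 1 < q < ∞
      have hq1lt : 1 < q := lt_of_le_of_ne hq (Ne.symm hq1)
      have hqinv_ne_top : q⁻¹ ≠ ∞ := by simp [hq0]
      have hqinv_lt_one : q⁻¹ < 1 := ENNReal.inv_lt_one.mpr hq1lt
      have hqinv_ne_zero : q⁻¹ ≠ 0 := ENNReal.inv_ne_zero.mpr hqtop
      have hq'inv_ne_zero : q'⁻¹ ≠ 0 := by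
        intro h; rw [h, add_zero] at hqc; exact hqinv_lt_one.ne hqc
      have hq'inv_ne_top : q'⁻¹ ≠ ∞ := by
        intro h; rw [h] at hqc; simp at hqc
      have hq'top : q' ≠ ∞ := by
        intro h; rw [h] at hq'inv_ne_zero; simp at hq'inv_ne_zero
      have htb : q.toReal⁻¹ = (q⁻¹).toReal := (ENNReal.toReal_inv q).symm
      have htb' : q'.toReal⁻¹ = (q'⁻¹).toReal := (ENNReal.toReal_inv q').symm
      have hbb : q.toReal⁻¹ + q'.toReal⁻¹ = 1 := by
        rw [htb, htb', ← ENNReal.toReal_add hqinv_ne_top hq'inv_ne_top, hqc, ENNReal.toReal_one]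
      have hconj : Real.HolderConjugate q.toReal q'.toReal := by
        constructor
        · rw [inv_one]; exact hbb
        · exact ENNReal.toReal_pos hq0 hqtop
        · have : 0 < q'.toReal⁻¹ := by
            rw [htb']; exact ENNReal.toReal_pos hq'inv_ne_zero hq'inv_ne_top
          exact inv_pos.mp this
      rw [lorentzNorm_ne_top μ p hqtop, lorentzNorm_ne_top μ p' hq'top]
      have heq : ∫⁻ t in Ioi (0 : ℝ), rf t * rg t
          = ∫⁻ t in Ioi (0 : ℝ),
              ((fun t => ENNReal.ofReal (t ^ (p.toReal⁻¹ - q.toReal⁻¹)) * rf t)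
                * fun t => ENNReal.ofReal (t ^ (p'.toReal⁻¹ - q'.toReal⁻¹)) * rg t) t := by
        refine lintegral_congr_ae ?_
        filter_upwards [ae_restrict_mem measurableSet_Ioi] with t ht
        have h1 : ENNReal.ofReal (t ^ (p.toReal⁻¹ - q.toReal⁻¹))
            * ENNReal.ofReal (t ^ (p'.toReal⁻¹ - q'.toReal⁻¹)) = 1 :=
          hof t ht _ _ (by linarith)
        show rf t * rg t = _
        calc rf t * rg t = (ENNReal.ofReal (t ^ (p.toReal⁻¹ - q.toReal⁻¹))
              * ENNReal.ofReal (t ^ (p'.toReal⁻¹ - q'.toReal⁻¹))) * (rf t * rg t) := by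
              rw [h1, one_mul]
          _ = _ := by simp only [Pi.mul_apply]; ring
      rw [heq]
      have := ENNReal.lintegral_mul_le_Lp_mul_Lq (volume.restrict (Ioi (0 : ℝ))) hconj
        (mf (p.toReal⁻¹ - q.toReal⁻¹)).aemeasurable
        (mg (p'.toReal⁻¹ - q'.toReal⁻¹)).aemeasurable
      rw [one_div, one_div] at this
      exact this
end

section
/- Let 1 < p, p₁, p₂ < ∞ and 1 ≤ q, q₁, q₂ ≤ ∞ satisfy 1/p₂ = 1/p + 1/p₁ and 1/q₂ = 1/q + 1/q₁. Then pointwise multiplication is a bounded bilinear map from L^{p,q} × L^{p₁,q₁} to L^{p₂,q₂} (Hölder's inequality in Lorentz spaces). -/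
open MeasureTheory ENNReal Set

section Helpers

variable {α : Type*} [MeasurableSpace α] {μ : Measure α}

variable {α : Type*} [MeasurableSpace α] {μ : Measure α}

lemma rearr_antitone (f : α → ℝ) : Antitone (rearrangement μ f) := by
  intro t t' h
  exact sInf_le_sInf fun s hs => le_trans hs (ENNReal.ofReal_le_ofReal h)

lemma rearr_measurable (f : α → ℝ) : Measurable (rearrangement μ f) :=
  (rearr_antitone f).measurable

lemma top_mem_rearr_set (f : α → ℝ) (t : ℝ) :
    μ {x | (⊤ : ℝ≥0∞) < (‖f x‖₊ : ℝ≥0∞)} ≤ ENNReal.ofReal t := by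
  have : {x | (⊤ : ℝ≥0∞) < (‖f x‖₊ : ℝ≥0∞)} = ∅ := by
    ext x; simp
  simp [this]

lemma rearr_zero_attained {f : α → ℝ} {t : ℝ} (h : rearrangement μ f t = 0) :
    μ {x | (0 : ℝ≥0∞) < (‖f x‖₊ : ℝ≥0∞)} ≤ ENNReal.ofReal t := by
  have key : ∀ n : ℕ, μ {x | ((n : ℝ≥0∞))⁻¹ < (‖f x‖₊ : ℝ≥0∞)} ≤ ENNReal.ofReal t := by
    intro n
    rcases Nat.eq_zero_or_pos n with hn | hn
    · subst hn; simpa using top_mem_rearr_set (μ := μ) f t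
    · have hpos : (0 : ℝ≥0∞) < ((n : ℝ≥0∞))⁻¹ := by
        simp [ENNReal.inv_pos]
      have hlt : sInf {s : ℝ≥0∞ | μ {x | s < (‖f x‖₊ : ℝ≥0∞)} ≤ ENNReal.ofReal t}
          < ((n : ℝ≥0∞))⁻¹ := by
        rw [rearrangement] at h; rw [h]; exact hpos
      obtain ⟨s, hsS, hslt⟩ := sInf_lt_iff.mp hlt
      exact le_trans (measure_mono fun x hx => lt_trans hslt hx) hsS
  have hU : {x | (0 : ℝ≥0∞) < (‖f x‖₊ : ℝ≥0∞)}
      = ⋃ n : ℕ, {x | ((n : ℝ≥0∞))⁻¹ < (‖f x‖₊ : ℝ≥0∞)} := by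
    ext x
    simp only [mem_setOf_eq, mem_iUnion]
    constructor
    · intro hx
      obtain ⟨n, hn⟩ := ENNReal.exists_inv_nat_lt (ne_of_gt hx)
      exact ⟨n, hn⟩
    · rintro ⟨n, hn⟩
      exact lt_of_le_of_lt zero_le hn
  rw [hU]
  have hdir : Directed (· ⊆ ·) fun n : ℕ => {x | ((n : ℝ≥0∞))⁻¹ < (‖f x‖₊ : ℝ≥0∞)} := by
    apply Monotone.directed_le
    intro m n hmn x hx
    exact lt_of_le_of_lt (ENNReal.inv_le_inv.mpr (by exact_mod_cast hmn)) hx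
  rw [Directed.measure_iUnion hdir]
  exact iSup_le key

lemma dist_mul_subset (f g : α → ℝ) (s₁ s₂ : ℝ≥0∞) :
    {x | s₁ * s₂ < (‖f x * g x‖₊ : ℝ≥0∞)} ⊆
      {x | s₁ < (‖f x‖₊ : ℝ≥0∞)} ∪ {x | s₂ < (‖g x‖₊ : ℝ≥0∞)} := by
  intro x hx
  by_contra hc
  simp only [mem_union, mem_setOf_eq, not_or, not_lt] at hc
  have : (‖f x * g x‖₊ : ℝ≥0∞) ≤ s₁ * s₂ := by
    calc (‖f x * g x‖₊ : ℝ≥0∞) = (‖f x‖₊ : ℝ≥0∞) * (‖g x‖₊ : ℝ≥0∞) := by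
          rw [nnnorm_mul]; exact_mod_cast ENNReal.coe_mul ..
      _ ≤ s₁ * s₂ := mul_le_mul' hc.1 hc.2
  exact absurd hx (not_lt.mpr this)

lemma rearr_mul_le (f g : α → ℝ) {t t' : ℝ} (ht : 0 ≤ t) (ht' : 0 ≤ t') :
    rearrangement μ (fun x => f x * g x) (t + t') ≤
      rearrangement μ f t * rearrangement μ g t' := by
  set S := {s : ℝ≥0∞ | μ {x | s < (‖f x‖₊ : ℝ≥0∞)} ≤ ENNReal.ofReal t} with hS
  set S' := {s : ℝ≥0∞ | μ {x | s < (‖g x‖₊ : ℝ≥0∞)} ≤ ENNReal.ofReal t'} with hS'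
  have key : ∀ s₁ ∈ S, ∀ s₂ ∈ S',
      rearrangement μ (fun x => f x * g x) (t + t') ≤ s₁ * s₂ := by
    intro s₁ h₁ s₂ h₂
    apply sInf_le
    show μ _ ≤ _
    calc μ {x | s₁ * s₂ < (‖f x * g x‖₊ : ℝ≥0∞)}
        ≤ μ ({x | s₁ < (‖f x‖₊ : ℝ≥0∞)} ∪ {x | s₂ < (‖g x‖₊ : ℝ≥0∞)}) :=
          measure_mono (dist_mul_subset f g s₁ s₂)
      _ ≤ μ {x | s₁ < (‖f x‖₊ : ℝ≥0∞)} + μ {x | s₂ < (‖g x‖₊ : ℝ≥0∞)} := measure_union_le _ _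
      _ ≤ ENNReal.ofReal t + ENNReal.ofReal t' := add_le_add h₁ h₂
      _ = ENNReal.ofReal (t + t') := (ENNReal.ofReal_add ht ht').symm
  have hStop : (⊤ : ℝ≥0∞) ∈ S := top_mem_rearr_set f t
  have hS'top : (⊤ : ℝ≥0∞) ∈ S' := top_mem_rearr_set g t'
  by_cases hf0 : rearrangement μ f t = 0
  · have h0 : (0 : ℝ≥0∞) ∈ S := rearr_zero_attained hf0
    have := key 0 h0 ⊤ hS'top
    simpa [hf0] using this
  by_cases hg0 : rearrangement μ g t' = 0
  · have h0 : (0 : ℝ≥0∞) ∈ S' := rearr_zero_attained hg0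
    have := key ⊤ hStop 0 h0
    simpa [hg0] using this
  · -- both nonzero: use infima
    have hne : Nonempty S := ⟨⟨⊤, hStop⟩⟩
    have hne' : Nonempty S' := ⟨⟨⊤, hS'top⟩⟩
    have ha : rearrangement μ f t = ⨅ s : S, (s : ℝ≥0∞) := sInf_eq_iInf' S
    have hb : rearrangement μ g t' = ⨅ s : S', (s : ℝ≥0∞) := sInf_eq_iInf' S'
    rw [ha, hb]
    rw [ENNReal.iInf_mul (fun hbtop hz => absurd (ha ▸ hz) hf0)]
    refine le_iInf fun s₁ => ?_
    rw [ENNReal.mul_iInf (fun _ hz => absurd (hb ▸ hz) hg0)]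
    exact le_iInf fun s₂ => key s₁ s₁.2 s₂ s₂.2


lemma lintegral_Ioi_scale (h : ℝ → ℝ≥0∞) (hm : Measurable h) :
    ∫⁻ t in Ioi (0:ℝ), h t = 2 * ∫⁻ t in Ioi (0:ℝ), h (2*t) := by
  have hmap := Real.map_volume_mul_left (a := (2:ℝ)) two_ne_zero
  have hpre : ((2:ℝ) * ·) ⁻¹' (Ioi 0) = Ioi 0 := by
    ext x; simp only [mem_preimage, mem_Ioi]; constructor <;> intro h1 <;> nlinarith
  have hs := setLIntegral_map (μ := volume) (s := Ioi (0:ℝ)) measurableSet_Ioi hm (measurable_const_mul 2)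
  rw [hmap, hpre] at hs
  rw [Measure.restrict_smul, lintegral_smul_measure] at hs
  rw [← hs, smul_eq_mul, ← mul_assoc]
  have : (2:ℝ≥0∞) * ENNReal.ofReal |(2:ℝ)⁻¹| = 1 := by
    rw [abs_of_pos (by norm_num)]
    rw [ENNReal.ofReal_inv_of_pos (by norm_num)]
    norm_num
    rw [ENNReal.mul_inv_cancel] <;> norm_num
  rw [this, one_mul]

lemma ofRealRpow_measurable (a : ℝ) :
    Measurable (fun t : ℝ => ENNReal.ofReal (t ^ a)) :=
  (measurable_id.pow_const a).ennreal_ofReal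

lemma holder_core (f g : α → ℝ) (a a₁ m : ℝ) (hm : 0 ≤ m) :
    (∫⁻ t in Ioi (0:ℝ),
        (ENNReal.ofReal (t ^ (a + a₁)) * rearrangement μ (fun x => f x * g x) t) ^ m)
      ≤ 2 * ENNReal.ofReal (2 ^ (a + a₁)) ^ m *
        ∫⁻ t in Ioi (0:ℝ),
          ((ENNReal.ofReal (t ^ a) * rearrangement μ f t) *
           (ENNReal.ofReal (t ^ a₁) * rearrangement μ g t)) ^ m := by
  set H : ℝ → ℝ≥0∞ := fun t =>
    (ENNReal.ofReal (t ^ (a + a₁)) * rearrangement μ (fun x => f x * g x) t) ^ m with hH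
  have hHm : Measurable H :=
    ((ofRealRpow_measurable (a + a₁)).mul (rearr_measurable _)).pow_const _
  rw [lintegral_Ioi_scale H hHm, mul_assoc]
  gcongr 2 * ?_
  rw [← lintegral_const_mul' _ _ (by
    exact ENNReal.rpow_ne_top_of_nonneg hm ENNReal.ofReal_ne_top)]
  refine setLIntegral_mono' measurableSet_Ioi fun t ht => ?_
  have ht0 : (0:ℝ) < t := ht
  have hsplit : ENNReal.ofReal ((2*t) ^ (a + a₁)) =
      ENNReal.ofReal (2 ^ (a + a₁)) * (ENNReal.ofReal (t ^ a) * ENNReal.ofReal (t ^ a₁)) := by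
    rw [Real.mul_rpow (by norm_num) ht0.le, Real.rpow_add ht0,
      ENNReal.ofReal_mul (by positivity), ENNReal.ofReal_mul (by positivity)]
  have hre : rearrangement μ (fun x => f x * g x) (2*t) ≤
      rearrangement μ f t * rearrangement μ g t := by
    have := rearr_mul_le (μ := μ) f g ht0.le ht0.le
    rwa [show t + t = 2*t by ring] at this
  calc H (2*t) = (ENNReal.ofReal ((2*t) ^ (a + a₁)) *
        rearrangement μ (fun x => f x * g x) (2*t)) ^ m := rfl
    _ ≤ (ENNReal.ofReal (2 ^ (a + a₁)) *
        ((ENNReal.ofReal (t ^ a) * rearrangement μ f t) *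
         (ENNReal.ofReal (t ^ a₁) * rearrangement μ g t))) ^ m := by
        refine ENNReal.rpow_le_rpow ?_ hm
        rw [hsplit]
        calc ENNReal.ofReal (2 ^ (a + a₁)) * (ENNReal.ofReal (t ^ a) * ENNReal.ofReal (t ^ a₁)) *
              rearrangement μ (fun x => f x * g x) (2*t)
            ≤ ENNReal.ofReal (2 ^ (a + a₁)) * (ENNReal.ofReal (t ^ a) * ENNReal.ofReal (t ^ a₁)) *
              (rearrangement μ f t * rearrangement μ g t) := by gcongr
          _ = _ := by ring
    _ = ENNReal.ofReal (2 ^ (a + a₁)) ^ m *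
        ((ENNReal.ofReal (t ^ a) * rearrangement μ f t) *
         (ENNReal.ofReal (t ^ a₁) * rearrangement μ g t)) ^ m :=
        ENNReal.mul_rpow_of_nonneg _ _ hm

end Helpers

/-- Hölder's inequality in Lorentz spaces:
multiplication is bounded from `L^{p,q} × L^{p₁,q₁}` to `L^{p₂,q₂}` when
`1/p₂ = 1/p + 1/p₁` and `1/q₂ = 1/q + 1/q₁`. -/
theorem lorentzNorm_mul_holder {α : Type*} [MeasurableSpace α] (μ : Measure α) [SigmaFinite μ]
    (p q p₁ q₁ p₂ q₂ : ℝ≥0∞)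
    (hp : 1 < p) (hp' : p ≠ ∞) (hp₁ : 1 < p₁) (hp₁' : p₁ ≠ ∞) (hp₂ : 1 < p₂) (hp₂' : p₂ ≠ ∞)
    (hq : 1 ≤ q) (hq₁ : 1 ≤ q₁) (hq₂ : 1 ≤ q₂)
    (hpc : p₂⁻¹ = p⁻¹ + p₁⁻¹) (hqc : q₂⁻¹ = q⁻¹ + q₁⁻¹) :
    ∃ C : ℝ≥0∞, C < ∞ ∧ ∀ f g : α → ℝ,
      AEStronglyMeasurable f μ → AEStronglyMeasurable g μ →
      lorentzNorm μ p₂ q₂ (fun x => f x * g x) ≤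
        C * lorentzNorm μ p q f * lorentzNorm μ p₁ q₁ g := by
  have hp0 : p ≠ 0 := (zero_lt_one.trans hp).ne'
  have hp₁0 : p₁ ≠ 0 := (zero_lt_one.trans hp₁).ne'
  have hq0 : q ≠ 0 := (zero_lt_one.trans_le hq).ne'
  have hq₁0 : q₁ ≠ 0 := (zero_lt_one.trans_le hq₁).ne'
  have hq₂0 : q₂ ≠ 0 := (zero_lt_one.trans_le hq₂).ne'
  have hcp : p₂.toReal⁻¹ = p.toReal⁻¹ + p₁.toReal⁻¹ := by
    have h := congrArg ENNReal.toReal hpc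
    rwa [ENNReal.toReal_add (by simp [hp0]) (by simp [hp₁0]), ENNReal.toReal_inv,
      ENNReal.toReal_inv, ENNReal.toReal_inv] at h
  have hcq : q₂.toReal⁻¹ = q.toReal⁻¹ + q₁.toReal⁻¹ := by
    have h := congrArg ENNReal.toReal hqc
    rwa [ENNReal.toReal_add (by simp [hq0]) (by simp [hq₁0]), ENNReal.toReal_inv,
      ENNReal.toReal_inv, ENNReal.toReal_inv] at h
  by_cases hqi : q = ∞
  · by_cases hq₁i : q₁ = ∞
    · -- Case A : q = q₁ = q₂ = ∞
      have hq₂i : q₂ = ∞ := by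
        have : q₂⁻¹ = 0 := by rw [hqc, hqi, hq₁i]; simp
        simpa [ENNReal.inv_eq_zero] using this
      refine ⟨ENNReal.ofReal (2 ^ p₂.toReal⁻¹), ENNReal.ofReal_lt_top, fun f g hf hg => ?_⟩
      simp only [lorentzNorm, if_pos hqi, if_pos hq₁i, if_pos hq₂i]
      refine iSup₂_le fun t ht => ?_
      have ht0 : (0:ℝ) < t := ht
      have hs0 : (0:ℝ) < t/2 := by linarith
      have hsum : t = t/2 + t/2 := by ring
      have hre : rearrangement μ (fun x => f x * g x) t ≤
          rearrangement μ f (t/2) * rearrangement μ g (t/2) := by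
        have h' := rearr_mul_le (μ := μ) f g hs0.le hs0.le
        rwa [← hsum] at h'
      have hsplit : ENNReal.ofReal (t ^ p₂.toReal⁻¹) =
          ENNReal.ofReal (2 ^ p₂.toReal⁻¹) *
            (ENNReal.ofReal ((t/2) ^ p.toReal⁻¹) * ENNReal.ofReal ((t/2) ^ p₁.toReal⁻¹)) := by
        rw [← ENNReal.ofReal_mul (by positivity), ← ENNReal.ofReal_mul (by positivity)]
        congr 1
        rw [← Real.rpow_add hs0, ← hcp, ← Real.mul_rpow (by norm_num) hs0.le,
          show (2:ℝ) * (t/2) = t by ring]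
      calc ENNReal.ofReal (t ^ p₂.toReal⁻¹) * rearrangement μ (fun x => f x * g x) t
          ≤ ENNReal.ofReal (2 ^ p₂.toReal⁻¹) *
            ((ENNReal.ofReal ((t/2) ^ p.toReal⁻¹) * rearrangement μ f (t/2)) *
             (ENNReal.ofReal ((t/2) ^ p₁.toReal⁻¹) * rearrangement μ g (t/2))) := by
            rw [hsplit]
            calc ENNReal.ofReal (2 ^ p₂.toReal⁻¹) *
                (ENNReal.ofReal ((t/2) ^ p.toReal⁻¹) * ENNReal.ofReal ((t/2) ^ p₁.toReal⁻¹)) *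
                rearrangement μ (fun x => f x * g x) t
                ≤ ENNReal.ofReal (2 ^ p₂.toReal⁻¹) *
                (ENNReal.ofReal ((t/2) ^ p.toReal⁻¹) * ENNReal.ofReal ((t/2) ^ p₁.toReal⁻¹)) *
                (rearrangement μ f (t/2) * rearrangement μ g (t/2)) := by gcongr
              _ = _ := by ring
        _ ≤ ENNReal.ofReal (2 ^ p₂.toReal⁻¹) *
            ((⨆ s ∈ Ioi (0:ℝ), ENNReal.ofReal (s ^ p.toReal⁻¹) * rearrangement μ f s) *
             (⨆ s ∈ Ioi (0:ℝ), ENNReal.ofReal (s ^ p₁.toReal⁻¹) * rearrangement μ g s)) := by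
            gcongr
            · exact le_biSup (fun s => ENNReal.ofReal (s ^ p.toReal⁻¹) * rearrangement μ f s)
                (mem_Ioi.mpr hs0)
            · exact le_biSup (fun s => ENNReal.ofReal (s ^ p₁.toReal⁻¹) * rearrangement μ g s)
                (mem_Ioi.mpr hs0)
        _ = _ := by rw [← mul_assoc]
    · -- Case B : q = ∞, q₁ ≠ ∞, so q₂ = q₁
      have heq : q₂ = q₁ := by
        have h : q₂⁻¹ = q₁⁻¹ := by rw [hqc, hqi]; simp
        rw [← inv_inv q₂, h, inv_inv]
      subst heq
      have hm1 : (1:ℝ) ≤ q₂.toReal := by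
        have := ENNReal.toReal_mono hq₁i hq₁
        simpa using this
      have hm0 : (0:ℝ) < q₂.toReal := lt_of_lt_of_le zero_lt_one hm1
      refine ⟨(2:ℝ≥0∞) ^ (q₂.toReal⁻¹) *
          ENNReal.ofReal (2 ^ (p₂.toReal⁻¹ - q₂.toReal⁻¹)), ?_, fun f g hf hg => ?_⟩
      · exact ENNReal.mul_lt_top
          (ENNReal.rpow_lt_top_of_nonneg (by positivity) (by norm_num)) ENNReal.ofReal_lt_top
      · simp only [lorentzNorm, if_pos hqi, if_neg hq₁i]
        have haa : p₂.toReal⁻¹ - q₂.toReal⁻¹ =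
            p.toReal⁻¹ + (p₁.toReal⁻¹ - q₂.toReal⁻¹) := by rw [hcp]; ring
        have hG : Measurable (fun t : ℝ => ENNReal.ofReal (t ^ (p₁.toReal⁻¹ - q₂.toReal⁻¹)) *
            rearrangement μ g t) := (ofRealRpow_measurable _).mul (rearr_measurable g)
        have hkey : (∫⁻ t in Ioi (0:ℝ),
            ((ENNReal.ofReal (t ^ (p.toReal⁻¹)) * rearrangement μ f t) *
             (ENNReal.ofReal (t ^ (p₁.toReal⁻¹ - q₂.toReal⁻¹)) * rearrangement μ g t))
              ^ q₂.toReal) ^ q₂.toReal⁻¹ ≤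
            (⨆ s ∈ Ioi (0:ℝ), ENNReal.ofReal (s ^ p.toReal⁻¹) * rearrangement μ f s) *
            (∫⁻ t in Ioi (0:ℝ),
              (ENNReal.ofReal (t ^ (p₁.toReal⁻¹ - q₂.toReal⁻¹)) * rearrangement μ g t)
                ^ q₂.toReal) ^ q₂.toReal⁻¹ := by
          set A := ⨆ s ∈ Ioi (0:ℝ), ENNReal.ofReal (s ^ p.toReal⁻¹) * rearrangement μ f s with hA
          have hstep : (∫⁻ t in Ioi (0:ℝ),
              ((ENNReal.ofReal (t ^ (p.toReal⁻¹)) * rearrangement μ f t) *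
               (ENNReal.ofReal (t ^ (p₁.toReal⁻¹ - q₂.toReal⁻¹)) * rearrangement μ g t))
                ^ q₂.toReal) ≤
              A ^ q₂.toReal * ∫⁻ t in Ioi (0:ℝ),
                (ENNReal.ofReal (t ^ (p₁.toReal⁻¹ - q₂.toReal⁻¹)) * rearrangement μ g t)
                  ^ q₂.toReal := by
            rw [← lintegral_const_mul _ (hG.pow_const _)]
            refine setLIntegral_mono' measurableSet_Ioi fun t ht => ?_
            rw [← ENNReal.mul_rpow_of_nonneg _ _ hm0.le]
            refine ENNReal.rpow_le_rpow ?_ hm0.le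
            gcongr
            exact le_biSup (fun s => ENNReal.ofReal (s ^ p.toReal⁻¹) * rearrangement μ f s) ht
          calc (∫⁻ t in Ioi (0:ℝ),
              ((ENNReal.ofReal (t ^ (p.toReal⁻¹)) * rearrangement μ f t) *
               (ENNReal.ofReal (t ^ (p₁.toReal⁻¹ - q₂.toReal⁻¹)) * rearrangement μ g t))
                ^ q₂.toReal) ^ q₂.toReal⁻¹
              ≤ (A ^ q₂.toReal * ∫⁻ t in Ioi (0:ℝ),
                  (ENNReal.ofReal (t ^ (p₁.toReal⁻¹ - q₂.toReal⁻¹)) * rearrangement μ g t)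
                    ^ q₂.toReal) ^ q₂.toReal⁻¹ :=
                ENNReal.rpow_le_rpow hstep (by positivity)
            _ = _ := by
                rw [ENNReal.mul_rpow_of_nonneg _ _ (by positivity : (0:ℝ) ≤ q₂.toReal⁻¹),
                  ENNReal.rpow_rpow_inv hm0.ne']
        calc (∫⁻ t in Ioi (0:ℝ),
              (ENNReal.ofReal (t ^ (p₂.toReal⁻¹ - q₂.toReal⁻¹)) *
                rearrangement μ (fun x => f x * g x) t) ^ q₂.toReal) ^ q₂.toReal⁻¹
            ≤ (2 * ENNReal.ofReal (2 ^ (p₂.toReal⁻¹ - q₂.toReal⁻¹)) ^ q₂.toReal *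
              ∫⁻ t in Ioi (0:ℝ),
                ((ENNReal.ofReal (t ^ (p.toReal⁻¹)) * rearrangement μ f t) *
                 (ENNReal.ofReal (t ^ (p₁.toReal⁻¹ - q₂.toReal⁻¹)) * rearrangement μ g t))
                  ^ q₂.toReal) ^ q₂.toReal⁻¹ := by
              refine ENNReal.rpow_le_rpow ?_ (by positivity)
              have := holder_core (μ := μ) f g (p.toReal⁻¹)
                (p₁.toReal⁻¹ - q₂.toReal⁻¹) q₂.toReal hm0.le
              rw [← haa] at this
              exact this
          _ = (2:ℝ≥0∞) ^ (q₂.toReal⁻¹) * ENNReal.ofReal (2 ^ (p₂.toReal⁻¹ - q₂.toReal⁻¹)) *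
              (∫⁻ t in Ioi (0:ℝ),
                ((ENNReal.ofReal (t ^ (p.toReal⁻¹)) * rearrangement μ f t) *
                 (ENNReal.ofReal (t ^ (p₁.toReal⁻¹ - q₂.toReal⁻¹)) * rearrangement μ g t))
                  ^ q₂.toReal) ^ q₂.toReal⁻¹ := by
              rw [ENNReal.mul_rpow_of_nonneg _ _ (by positivity : (0:ℝ) ≤ q₂.toReal⁻¹),
                ENNReal.mul_rpow_of_nonneg _ _ (by positivity : (0:ℝ) ≤ q₂.toReal⁻¹),
                ENNReal.rpow_rpow_inv hm0.ne']
          _ ≤ (2:ℝ≥0∞) ^ (q₂.toReal⁻¹) * ENNReal.ofReal (2 ^ (p₂.toReal⁻¹ - q₂.toReal⁻¹)) *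
              ((⨆ s ∈ Ioi (0:ℝ), ENNReal.ofReal (s ^ p.toReal⁻¹) * rearrangement μ f s) *
               (∫⁻ t in Ioi (0:ℝ),
                 (ENNReal.ofReal (t ^ (p₁.toReal⁻¹ - q₂.toReal⁻¹)) * rearrangement μ g t)
                   ^ q₂.toReal) ^ q₂.toReal⁻¹) := by gcongr
          _ = _ := by ring
  · by_cases hq₁i : q₁ = ∞
    · -- Case C : q ≠ ∞, q₁ = ∞, so q₂ = q
      have heq : q₂ = q := by
        have h : q₂⁻¹ = q⁻¹ := by rw [hqc, hq₁i]; simp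
        rw [← inv_inv q₂, h, inv_inv]
      subst heq
      have hm1 : (1:ℝ) ≤ q₂.toReal := by
        have := ENNReal.toReal_mono hqi hq
        simpa using this
      have hm0 : (0:ℝ) < q₂.toReal := lt_of_lt_of_le zero_lt_one hm1
      refine ⟨(2:ℝ≥0∞) ^ (q₂.toReal⁻¹) *
          ENNReal.ofReal (2 ^ (p₂.toReal⁻¹ - q₂.toReal⁻¹)), ?_, fun f g hf hg => ?_⟩
      · exact ENNReal.mul_lt_top
          (ENNReal.rpow_lt_top_of_nonneg (by positivity) (by norm_num)) ENNReal.ofReal_lt_top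
      · simp only [lorentzNorm, if_neg hqi, if_pos hq₁i]
        have haa : p₂.toReal⁻¹ - q₂.toReal⁻¹ =
            (p.toReal⁻¹ - q₂.toReal⁻¹) + p₁.toReal⁻¹ := by rw [hcp]; ring
        have hF : Measurable (fun t : ℝ => ENNReal.ofReal (t ^ (p.toReal⁻¹ - q₂.toReal⁻¹)) *
            rearrangement μ f t) := (ofRealRpow_measurable _).mul (rearr_measurable f)
        have hkey : (∫⁻ t in Ioi (0:ℝ),
            ((ENNReal.ofReal (t ^ (p.toReal⁻¹ - q₂.toReal⁻¹)) * rearrangement μ f t) *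
             (ENNReal.ofReal (t ^ (p₁.toReal⁻¹)) * rearrangement μ g t))
              ^ q₂.toReal) ^ q₂.toReal⁻¹ ≤
            (∫⁻ t in Ioi (0:ℝ),
              (ENNReal.ofReal (t ^ (p.toReal⁻¹ - q₂.toReal⁻¹)) * rearrangement μ f t)
                ^ q₂.toReal) ^ q₂.toReal⁻¹ *
            (⨆ s ∈ Ioi (0:ℝ), ENNReal.ofReal (s ^ p₁.toReal⁻¹) * rearrangement μ g s) := by
          set B := ⨆ s ∈ Ioi (0:ℝ), ENNReal.ofReal (s ^ p₁.toReal⁻¹) * rearrangement μ g s with hB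
          have hstep : (∫⁻ t in Ioi (0:ℝ),
              ((ENNReal.ofReal (t ^ (p.toReal⁻¹ - q₂.toReal⁻¹)) * rearrangement μ f t) *
               (ENNReal.ofReal (t ^ (p₁.toReal⁻¹)) * rearrangement μ g t))
                ^ q₂.toReal) ≤
              (∫⁻ t in Ioi (0:ℝ),
                (ENNReal.ofReal (t ^ (p.toReal⁻¹ - q₂.toReal⁻¹)) * rearrangement μ f t)
                  ^ q₂.toReal) * B ^ q₂.toReal := by
            rw [← lintegral_mul_const _ (hF.pow_const _)]
            refine setLIntegral_mono' measurableSet_Ioi fun t ht => ?_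
            rw [← ENNReal.mul_rpow_of_nonneg _ _ hm0.le]
            refine ENNReal.rpow_le_rpow ?_ hm0.le
            gcongr
            exact le_biSup (fun s => ENNReal.ofReal (s ^ p₁.toReal⁻¹) * rearrangement μ g s) ht
          calc (∫⁻ t in Ioi (0:ℝ),
              ((ENNReal.ofReal (t ^ (p.toReal⁻¹ - q₂.toReal⁻¹)) * rearrangement μ f t) *
               (ENNReal.ofReal (t ^ (p₁.toReal⁻¹)) * rearrangement μ g t))
                ^ q₂.toReal) ^ q₂.toReal⁻¹
              ≤ ((∫⁻ t in Ioi (0:ℝ),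
                  (ENNReal.ofReal (t ^ (p.toReal⁻¹ - q₂.toReal⁻¹)) * rearrangement μ f t)
                    ^ q₂.toReal) * B ^ q₂.toReal) ^ q₂.toReal⁻¹ :=
                ENNReal.rpow_le_rpow hstep (by positivity)
            _ = _ := by
                rw [ENNReal.mul_rpow_of_nonneg _ _ (by positivity : (0:ℝ) ≤ q₂.toReal⁻¹),
                  ENNReal.rpow_rpow_inv hm0.ne']
        calc (∫⁻ t in Ioi (0:ℝ),
              (ENNReal.ofReal (t ^ (p₂.toReal⁻¹ - q₂.toReal⁻¹)) *
                rearrangement μ (fun x => f x * g x) t) ^ q₂.toReal) ^ q₂.toReal⁻¹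
            ≤ (2 * ENNReal.ofReal (2 ^ (p₂.toReal⁻¹ - q₂.toReal⁻¹)) ^ q₂.toReal *
              ∫⁻ t in Ioi (0:ℝ),
                ((ENNReal.ofReal (t ^ (p.toReal⁻¹ - q₂.toReal⁻¹)) * rearrangement μ f t) *
                 (ENNReal.ofReal (t ^ (p₁.toReal⁻¹)) * rearrangement μ g t))
                  ^ q₂.toReal) ^ q₂.toReal⁻¹ := by
              refine ENNReal.rpow_le_rpow ?_ (by positivity)
              have := holder_core (μ := μ) f g (p.toReal⁻¹ - q₂.toReal⁻¹)
                (p₁.toReal⁻¹) q₂.toReal hm0.le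
              rw [← haa] at this
              exact this
          _ = (2:ℝ≥0∞) ^ (q₂.toReal⁻¹) * ENNReal.ofReal (2 ^ (p₂.toReal⁻¹ - q₂.toReal⁻¹)) *
              (∫⁻ t in Ioi (0:ℝ),
                ((ENNReal.ofReal (t ^ (p.toReal⁻¹ - q₂.toReal⁻¹)) * rearrangement μ f t) *
                 (ENNReal.ofReal (t ^ (p₁.toReal⁻¹)) * rearrangement μ g t))
                  ^ q₂.toReal) ^ q₂.toReal⁻¹ := by
              rw [ENNReal.mul_rpow_of_nonneg _ _ (by positivity : (0:ℝ) ≤ q₂.toReal⁻¹),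
                ENNReal.mul_rpow_of_nonneg _ _ (by positivity : (0:ℝ) ≤ q₂.toReal⁻¹),
                ENNReal.rpow_rpow_inv hm0.ne']
          _ ≤ (2:ℝ≥0∞) ^ (q₂.toReal⁻¹) * ENNReal.ofReal (2 ^ (p₂.toReal⁻¹ - q₂.toReal⁻¹)) *
              ((∫⁻ t in Ioi (0:ℝ),
                 (ENNReal.ofReal (t ^ (p.toReal⁻¹ - q₂.toReal⁻¹)) * rearrangement μ f t)
                   ^ q₂.toReal) ^ q₂.toReal⁻¹ *
               (⨆ s ∈ Ioi (0:ℝ), ENNReal.ofReal (s ^ p₁.toReal⁻¹) * rearrangement μ g s)) := by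
              gcongr
          _ = _ := by ring
    · -- Case D : q ≠ ∞, q₁ ≠ ∞
      have hq₂i : q₂ ≠ ∞ := by
        intro h
        rw [h, ENNReal.inv_top] at hqc
        exact hqi (ENNReal.inv_eq_zero.mp (add_eq_zero.mp hqc.symm).1)
      have hm1 : (1:ℝ) ≤ q₂.toReal := by
        have := ENNReal.toReal_mono hq₂i hq₂
        simpa using this
      have hm0 : (0:ℝ) < q₂.toReal := lt_of_lt_of_le zero_lt_one hm1
      refine ⟨(2:ℝ≥0∞) ^ (q₂.toReal⁻¹) *
          ENNReal.ofReal (2 ^ (p₂.toReal⁻¹ - q₂.toReal⁻¹)), ?_, fun f g hf hg => ?_⟩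
      · exact ENNReal.mul_lt_top
          (ENNReal.rpow_lt_top_of_nonneg (by positivity) (by norm_num)) ENNReal.ofReal_lt_top
      · simp only [lorentzNorm, if_neg hqi, if_neg hq₁i, if_neg hq₂i]
        have haa : p₂.toReal⁻¹ - q₂.toReal⁻¹ =
            (p.toReal⁻¹ - q.toReal⁻¹) + (p₁.toReal⁻¹ - q₁.toReal⁻¹) := by
          rw [hcp, hcq]; ring
        have hmq : q₂.toReal < q.toReal := by
          refine (ENNReal.toReal_lt_toReal hq₂i hqi).mpr ?_
          have h1 : q⁻¹ < q₂⁻¹ := by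
            rw [hqc]
            exact ENNReal.lt_add_right (by simp [hq0]) (by simp [hq₁i])
          exact ENNReal.inv_lt_inv.mp h1
        have hrel : 1 / q₂.toReal = 1 / q.toReal + 1 / q₁.toReal := by
          rw [one_div, one_div, one_div]; exact hcq
        have hF : Measurable (fun t : ℝ => ENNReal.ofReal (t ^ (p.toReal⁻¹ - q.toReal⁻¹)) *
            rearrangement μ f t) := (ofRealRpow_measurable _).mul (rearr_measurable f)
        have hG : Measurable (fun t : ℝ => ENNReal.ofReal (t ^ (p₁.toReal⁻¹ - q₁.toReal⁻¹)) *
            rearrangement μ g t) := (ofRealRpow_measurable _).mul (rearr_measurable g)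
        have hH := ENNReal.lintegral_Lp_mul_le_Lq_mul_Lr hm0 hmq hrel
          (volume.restrict (Ioi (0:ℝ))) hF.aemeasurable hG.aemeasurable
        simp only [Pi.mul_apply, one_div] at hH
        calc (∫⁻ t in Ioi (0:ℝ),
              (ENNReal.ofReal (t ^ (p₂.toReal⁻¹ - q₂.toReal⁻¹)) *
                rearrangement μ (fun x => f x * g x) t) ^ q₂.toReal) ^ q₂.toReal⁻¹
            ≤ (2 * ENNReal.ofReal (2 ^ (p₂.toReal⁻¹ - q₂.toReal⁻¹)) ^ q₂.toReal *
              ∫⁻ t in Ioi (0:ℝ),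
                ((ENNReal.ofReal (t ^ (p.toReal⁻¹ - q.toReal⁻¹)) * rearrangement μ f t) *
                 (ENNReal.ofReal (t ^ (p₁.toReal⁻¹ - q₁.toReal⁻¹)) * rearrangement μ g t))
                  ^ q₂.toReal) ^ q₂.toReal⁻¹ := by
              refine ENNReal.rpow_le_rpow ?_ (by positivity)
              have := holder_core (μ := μ) f g (p.toReal⁻¹ - q.toReal⁻¹)
                (p₁.toReal⁻¹ - q₁.toReal⁻¹) q₂.toReal hm0.le
              rw [← haa] at this
              exact this
          _ = (2:ℝ≥0∞) ^ (q₂.toReal⁻¹) * ENNReal.ofReal (2 ^ (p₂.toReal⁻¹ - q₂.toReal⁻¹)) *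
              (∫⁻ t in Ioi (0:ℝ),
                ((ENNReal.ofReal (t ^ (p.toReal⁻¹ - q.toReal⁻¹)) * rearrangement μ f t) *
                 (ENNReal.ofReal (t ^ (p₁.toReal⁻¹ - q₁.toReal⁻¹)) * rearrangement μ g t))
                  ^ q₂.toReal) ^ q₂.toReal⁻¹ := by
              rw [ENNReal.mul_rpow_of_nonneg _ _ (by positivity : (0:ℝ) ≤ q₂.toReal⁻¹),
                ENNReal.mul_rpow_of_nonneg _ _ (by positivity : (0:ℝ) ≤ q₂.toReal⁻¹),
                ENNReal.rpow_rpow_inv hm0.ne']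
          _ ≤ (2:ℝ≥0∞) ^ (q₂.toReal⁻¹) * ENNReal.ofReal (2 ^ (p₂.toReal⁻¹ - q₂.toReal⁻¹)) *
              ((∫⁻ t in Ioi (0:ℝ),
                  (ENNReal.ofReal (t ^ (p.toReal⁻¹ - q.toReal⁻¹)) * rearrangement μ f t)
                    ^ q.toReal) ^ q.toReal⁻¹ *
               (∫⁻ t in Ioi (0:ℝ),
                  (ENNReal.ofReal (t ^ (p₁.toReal⁻¹ - q₁.toReal⁻¹)) * rearrangement μ g t)
                    ^ q₁.toReal) ^ q₁.toReal⁻¹) := by gcongr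
          _ = _ := by ring
end

section
/- Let 0 < s < n, 1 < q < n/s, and define p by 1/p = s/n + 1/q. Then for 1 ≤ r ≤ ∞ there is a constant C such that ‖ f(·)/|·|^s ‖_{L^{p,r}(ℝⁿ)} ≤ C ‖f‖_{L^{q,r}(ℝⁿ)} for all f ∈ L^{q,r}(ℝⁿ). -/
open MeasureTheory ENNReal Set

lemma rearr_le {α : Type*} [MeasurableSpace α] (μ : Measure α) {E : Type*} [NNNorm E]
    (f : α → E) (t : ℝ) {a : ℝ≥0∞} (ha : μ {x | a < (‖f x‖₊ : ℝ≥0∞)} ≤ ENNReal.ofReal t) :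
    rearrangement μ f t ≤ a := sInf_le ha

lemma rearr_mem {α : Type*} [MeasurableSpace α] (μ : Measure α) {E : Type*} [NNNorm E]
    (f : α → E) (t : ℝ) :
    μ {x | rearrangement μ f t < (‖f x‖₊ : ℝ≥0∞)} ≤ ENNReal.ofReal t := by
  set S := {s : ℝ≥0∞ | μ {x | s < (‖f x‖₊ : ℝ≥0∞)} ≤ ENNReal.ofReal t} with hS
  have hne : S.Nonempty := ⟨∞, by simp [hS]⟩
  obtain ⟨u, hanti, htend, hmem⟩ := exists_seq_tendsto_sInf hne (OrderBot.bddBelow S)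
  have hsub : {x | sInf S < (‖f x‖₊ : ℝ≥0∞)} ⊆ ⋃ k, {x | u k < (‖f x‖₊ : ℝ≥0∞)} := by
    intro x hx
    have : ∀ᶠ k in Filter.atTop, u k < (‖f x‖₊ : ℝ≥0∞) :=
      htend.eventually_lt_const hx
    obtain ⟨k, hk⟩ := this.exists
    exact mem_iUnion.2 ⟨k, hk⟩
  calc μ {x | rearrangement μ f t < (‖f x‖₊ : ℝ≥0∞)}
      ≤ μ (⋃ k, {x | u k < (‖f x‖₊ : ℝ≥0∞)}) := measure_mono hsub
    _ = ⨆ k, μ {x | u k < (‖f x‖₊ : ℝ≥0∞)} := by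
        apply Directed.measure_iUnion
        exact Monotone.directed_le fun i j hij x hx =>
          lt_of_le_of_lt (by exact_mod_cast hanti hij) hx
    _ ≤ ENNReal.ofReal t := iSup_le fun k => hmem k

lemma rearr_anti {α : Type*} [MeasurableSpace α] (μ : Measure α) {E : Type*} [NNNorm E]
    (f : α → E) : Antitone (rearrangement μ f) := by
  intro t₁ t₂ h
  exact sInf_le_sInf fun a ha => le_trans ha (ENNReal.ofReal_le_ofReal h)

lemma rearr_submul {α : Type*} [MeasurableSpace α] (μ : Measure α)
    (h f g : α → ℂ) (hfg : ∀ x, (‖h x‖₊ : ℝ≥0∞) ≤ (‖f x‖₊ : ℝ≥0∞) * (‖g x‖₊ : ℝ≥0∞))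
    (t : ℝ) (ht : 0 ≤ t) :
    rearrangement μ h (2 * t) ≤ rearrangement μ f t * rearrangement μ g t := by
  apply rearr_le
  have hsub : {x | rearrangement μ f t * rearrangement μ g t < (‖h x‖₊ : ℝ≥0∞)} ⊆
      {x | rearrangement μ f t < (‖f x‖₊ : ℝ≥0∞)} ∪
        {x | rearrangement μ g t < (‖g x‖₊ : ℝ≥0∞)} := by
    intro x hx
    by_contra hc
    simp only [mem_union, mem_setOf_eq, not_or, not_lt] at hc
    simp only [mem_setOf_eq] at hx
    exact absurd (le_trans (hfg x) (mul_le_mul' hc.1 hc.2)) (not_le.2 hx)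
  calc μ _ ≤ μ _ := measure_mono hsub
    _ ≤ μ {x | rearrangement μ f t < (‖f x‖₊ : ℝ≥0∞)} +
        μ {x | rearrangement μ g t < (‖g x‖₊ : ℝ≥0∞)} := measure_union_le _ _
    _ ≤ ENNReal.ofReal t + ENNReal.ofReal t := add_le_add (rearr_mem μ f t) (rearr_mem μ g t)
    _ = ENNReal.ofReal (2 * t) := by rw [two_mul, ENNReal.ofReal_add ht ht]

lemma g_bound (n : ℕ) (hn : 0 < n) (s : ℝ) (hs : 0 < s) (t : ℝ) (ht : 0 < t) :
    rearrangement (volume : Measure (EuclideanSpace ℝ (Fin n)))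
        (fun x => (((‖x‖ ^ s : ℝ) : ℂ))⁻¹) t ≤
      ENNReal.ofReal ((volume (Metric.ball (0:EuclideanSpace ℝ (Fin n)) 1)).toReal ^ (s / n)) *
      ENNReal.ofReal (t ^ (-(s / n))) := by
  set E := EuclideanSpace ℝ (Fin n)
  set Vb := volume (Metric.ball (0:E) 1) with hVb
  have hVb0 : Vb ≠ 0 := (Metric.measure_ball_pos _ _ one_pos).ne'
  have hVbT : Vb ≠ ∞ := measure_ball_lt_top.ne
  set V := Vb.toReal with hV
  have hVpos : 0 < V := ENNReal.toReal_pos hVb0 hVbT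
  have htV : 0 < t / V := div_pos ht hVpos
  set R : ℝ := (t / V) ^ ((n:ℝ)⁻¹) with hR
  have hRpos : 0 < R := Real.rpow_pos_of_pos htV _
  have hnorm : ∀ x : E, ‖(((‖x‖ ^ s : ℝ) : ℂ))⁻¹‖ = (‖x‖ ^ s)⁻¹ := by
    intro x
    rw [norm_inv, Complex.norm_real, Real.norm_of_nonneg (Real.rpow_nonneg (norm_nonneg x) s)]
  have key : rearrangement (volume : Measure E) (fun x => (((‖x‖ ^ s : ℝ) : ℂ))⁻¹) t ≤
      ENNReal.ofReal (R ^ (-s)) := by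
    apply rearr_le
    have hsub : {x : E | ENNReal.ofReal (R ^ (-s)) < (‖(((‖x‖ ^ s : ℝ) : ℂ))⁻¹‖₊ : ℝ≥0∞)} ⊆
        Metric.ball (0:E) R := by
      intro x hx
      simp only [mem_setOf_eq] at hx
      rw [Metric.mem_ball, dist_zero_right]
      by_contra hcon
      push_neg at hcon
      have h1 : ‖(((‖x‖ ^ s : ℝ) : ℂ))⁻¹‖ ≤ R ^ (-s) := by
        rw [hnorm x, Real.rpow_neg hRpos.le]
        exact inv_anti₀ (Real.rpow_pos_of_pos hRpos s) (Real.rpow_le_rpow hRpos.le hcon hs.le)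
      have h2 : (‖(((‖x‖ ^ s : ℝ) : ℂ))⁻¹‖₊ : ℝ≥0∞) ≤ ENNReal.ofReal (R ^ (-s)) := by
        rw [← ENNReal.ofReal_coe_nnreal, coe_nnnorm]
        exact ENNReal.ofReal_le_ofReal h1
      exact absurd (lt_of_lt_of_le hx h2) (lt_irrefl _)
    calc volume {x : E | ENNReal.ofReal (R ^ (-s)) < (‖(((‖x‖ ^ s : ℝ) : ℂ))⁻¹‖₊ : ℝ≥0∞)}
        ≤ volume (Metric.ball (0:E) R) := measure_mono hsub
      _ = ENNReal.ofReal (R ^ (Module.finrank ℝ E)) * Vb :=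
          Measure.addHaar_ball_of_pos _ _ hRpos
      _ = ENNReal.ofReal t := by
          have hfr : Module.finrank ℝ E = n := finrank_euclideanSpace_fin
          rw [hfr]
          have : R ^ (n:ℕ) = t / V := by
            rw [← Real.rpow_natCast R n, hR, ← Real.rpow_mul htV.le,
              inv_mul_cancel₀ (by exact_mod_cast hn.ne' : (n:ℝ) ≠ 0), Real.rpow_one]
          rw [this, ENNReal.ofReal_div_of_pos hVpos, hV, ENNReal.ofReal_toReal hVbT,
            ENNReal.div_mul_cancel hVb0 hVbT]
  refine key.trans ?_
  have : R ^ (-s) = V ^ (s / n) * t ^ (-(s / n)) := by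
    rw [hR, ← Real.rpow_mul htV.le]
    have hexp : (↑n:ℝ)⁻¹ * (-s) = -(s/n) := by ring
    rw [hexp, Real.rpow_neg htV.le, Real.div_rpow ht.le hVpos.le, inv_div, div_eq_mul_inv,
      ← Real.rpow_neg ht.le]
  rw [this, ENNReal.ofReal_mul (Real.rpow_nonneg hVpos.le _)]

lemma lintegral_Ioi_half (G : ℝ → ℝ≥0∞) (hG : Measurable G) :
    ∫⁻ t in Ioi (0:ℝ), G (t/2) = 2 * ∫⁻ u in Ioi (0:ℝ), G u := by
  have hT : Measurable (fun x : ℝ => 2 * x) := (measurable_const_mul 2)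
  have hmap : Measure.map (fun x : ℝ => 2 * x) (volume.restrict (Ioi (0:ℝ)))
      = (ENNReal.ofReal |( (2:ℝ))⁻¹| ) • (volume.restrict (Ioi (0:ℝ))) := by
    have hemb : MeasurableEmbedding (fun x : ℝ => 2 * x) :=
      (Homeomorph.mulLeft₀ (2:ℝ) two_ne_zero).measurableEmbedding
    have hpre : (fun x : ℝ => 2 * x) ⁻¹' (Ioi 0) = Ioi 0 := by
      ext x
      simp only [mem_preimage, mem_Ioi]
      constructor
      · intro h; nlinarith
      · intro h; nlinarith
    rw [← hpre, ← hemb.restrict_map, Real.map_volume_mul_left two_ne_zero, hpre,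
      Measure.restrict_smul]
  have h1 : ∫⁻ y, G (y/2) ∂(Measure.map (fun x : ℝ => 2 * x) (volume.restrict (Ioi (0:ℝ))))
      = ∫⁻ x in Ioi (0:ℝ), G x := by
    have hf : Measurable fun y : ℝ => G (y/2) := hG.comp (measurable_id.div_const 2)
    rw [lintegral_map hf hT]
    apply lintegral_congr
    intro x
    norm_num
  rw [hmap, lintegral_smul_measure, smul_eq_mul] at h1
  rw [← h1, ← mul_assoc]
  have : (2:ℝ≥0∞) * ENNReal.ofReal |((2:ℝ))⁻¹| = 1 := by
    rw [abs_of_pos (by norm_num : (0:ℝ) < 2⁻¹)]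
    rw [ENNReal.ofReal_inv_of_pos (by norm_num : (0:ℝ) < 2)]
    rw [ENNReal.ofReal_ofNat]
    exact ENNReal.mul_inv_cancel (by norm_num) (by norm_num)
  rw [this, one_mul]

/-- Hölder step of the Sobolev–Hardy–Littlewood inequality: for `0 < s < n`,
`1 < q < n/s`, `1/p = s/n + 1/q` and `1 ≤ r ≤ ∞`,
`‖ f/|x|^s ‖_{L^{p,r}(ℝⁿ)} ≤ C ‖f‖_{L^{q,r}(ℝⁿ)}`. -/
theorem lorentz_div_rpow (n : ℕ) (s q p : ℝ) (hs : 0 < s) (hsn : s < n)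
    (hq : 1 < q) (hq' : q < n / s) (hp : 1 / p = s / n + 1 / q) (r : ℝ≥0∞) (hr : 1 ≤ r) :
    ∃ C : ℝ≥0∞, C < ∞ ∧ ∀ f : EuclideanSpace ℝ (Fin n) → ℂ,
      AEStronglyMeasurable f volume →
      lorentzNorm volume (ENNReal.ofReal p) r (fun x => f x / ((‖x‖ ^ s : ℝ) : ℂ)) ≤
        C * lorentzNorm volume (ENNReal.ofReal q) r f := by
  have hnR : (0:ℝ) < n := hs.trans hsn
  have hn : 0 < n := by exact_mod_cast hnR
  have hq0 : 0 < q := lt_trans one_pos hq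
  have hp0 : 0 < p := by
    have h1 : 0 < 1/p := by rw [hp]; positivity
    exact (one_div_pos).mp h1
  set E := EuclideanSpace ℝ (Fin n)
  set σ : ℝ := s / n with hσdef
  have hσ : 0 < σ := div_pos hs hnR
  set γ : ℝ := q⁻¹ - r.toReal⁻¹ with hγdef
  have hα : p⁻¹ - r.toReal⁻¹ = σ + γ := by
    have hpinv : p⁻¹ = σ + q⁻¹ := by
      rw [← one_div, hp, hσdef, one_div]
    rw [hpinv, hγdef]; ring
  set Vb := volume (Metric.ball (0:E) 1) with hVbdef
  set V := Vb.toReal with hVdef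
  set K : ℝ≥0∞ := ENNReal.ofReal (V ^ σ) with hKdef
  set C₀ : ℝ≥0∞ := ENNReal.ofReal (2 ^ (σ + γ)) * K with hC₀def
  have hC₀T : C₀ ≠ ∞ := by
    rw [hC₀def, hKdef]
    exact (ENNReal.mul_lt_top ENNReal.ofReal_lt_top ENNReal.ofReal_lt_top).ne
  refine ⟨C₀ * (2:ℝ≥0∞) ^ (r.toReal⁻¹), ?_, ?_⟩
  · exact ENNReal.mul_lt_top hC₀T.lt_top
      (ENNReal.rpow_lt_top_of_nonneg (inv_nonneg.2 ENNReal.toReal_nonneg) (by norm_num))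
  intro f _
  -- the pointwise estimate
  have hpoint : ∀ t : ℝ, 0 < t →
      ENNReal.ofReal (t ^ (σ + γ)) *
          rearrangement (volume : Measure E) (fun x => f x / ((‖x‖ ^ s : ℝ) : ℂ)) t ≤
        C₀ * (ENNReal.ofReal ((t/2) ^ γ) * rearrangement (volume : Measure E) f (t/2)) := by
    intro t ht
    have ht2 : 0 < t / 2 := half_pos ht
    have hfg : ∀ x : E, (‖f x / ((‖x‖ ^ s : ℝ) : ℂ)‖₊ : ℝ≥0∞) ≤
        (‖f x‖₊ : ℝ≥0∞) * (‖(((‖x‖ ^ s : ℝ) : ℂ))⁻¹‖₊ : ℝ≥0∞) := by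
      intro x
      rw [div_eq_mul_inv, nnnorm_mul, ENNReal.coe_mul]
    have h2 : rearrangement (volume : Measure E) (fun x => f x / ((‖x‖ ^ s : ℝ) : ℂ)) t ≤
        rearrangement (volume : Measure E) f (t/2) *
          rearrangement (volume : Measure E) (fun x : E => (((‖x‖ ^ s : ℝ) : ℂ))⁻¹) (t/2) := by
      have h := rearr_submul (volume : Measure E) (fun x => f x / ((‖x‖ ^ s : ℝ) : ℂ)) f
        (fun x : E => (((‖x‖ ^ s : ℝ) : ℂ))⁻¹) hfg (t/2) ht2.le
      rwa [show 2 * (t/2) = t by ring] at h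
    have h3 : rearrangement (volume : Measure E) (fun x : E => (((‖x‖ ^ s : ℝ) : ℂ))⁻¹) (t/2)
        ≤ K * ENNReal.ofReal ((t/2) ^ (-σ)) := g_bound n hn s hs (t/2) ht2
    have hreal : t ^ (σ + γ) * (t/2) ^ (-σ) = 2 ^ (σ + γ) * (t/2) ^ γ := by
      have e1 : t ^ (σ + γ) = 2 ^ (σ + γ) * (t/2) ^ (σ + γ) := by
        rw [← Real.mul_rpow (by norm_num) ht2.le, show (2:ℝ) * (t/2) = t by ring]
      rw [e1, mul_assoc, ← Real.rpow_add ht2]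
      norm_num
    calc ENNReal.ofReal (t ^ (σ + γ)) *
          rearrangement (volume : Measure E) (fun x => f x / ((‖x‖ ^ s : ℝ) : ℂ)) t
        ≤ ENNReal.ofReal (t ^ (σ + γ)) *
            (rearrangement (volume : Measure E) f (t/2) * (K * ENNReal.ofReal ((t/2) ^ (-σ)))) :=
          mul_le_mul_right (h2.trans (mul_le_mul_right h3 _)) _
      _ = (ENNReal.ofReal (t ^ (σ + γ)) * ENNReal.ofReal ((t/2) ^ (-σ))) * K *
            rearrangement (volume : Measure E) f (t/2) := by ring
      _ = C₀ * (ENNReal.ofReal ((t/2) ^ γ) * rearrangement (volume : Measure E) f (t/2)) := by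
          rw [← ENNReal.ofReal_mul (Real.rpow_nonneg ht.le _), hreal,
            ENNReal.ofReal_mul (Real.rpow_nonneg (by norm_num : (0:ℝ) ≤ 2) _), hC₀def]
          ring
  by_cases hri : r = ∞
  · -- supremum case
    have hr0 : r.toReal⁻¹ = 0 := by rw [hri]; simp
    have hep : (ENNReal.ofReal p).toReal⁻¹ = σ + γ := by
      rw [ENNReal.toReal_ofReal hp0.le, ← hα, hr0, sub_zero]
    have heq : (ENNReal.ofReal q).toReal⁻¹ = γ := by
      rw [ENNReal.toReal_ofReal hq0.le, hγdef, hr0, sub_zero]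
    simp only [lorentzNorm, if_pos hri, hep, heq]
    rw [hri, hr0] at *
    rw [ENNReal.rpow_zero, mul_one]
    apply iSup₂_le
    intro t ht
    refine (hpoint t ht).trans ?_
    exact mul_le_mul_right
      (le_biSup (f := fun u : ℝ => ENNReal.ofReal (u ^ γ) * rearrangement (volume : Measure E) f u)
        (mem_Ioi.2 (half_pos ht))) _
  · -- integral case
    set ρ := r.toReal with hρdef
    have hρ1 : 1 ≤ ρ := by
      have := ENNReal.toReal_mono hri hr
      simpa using this
    have hρ0 : 0 < ρ := lt_of_lt_of_le one_pos hρ1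
    have hep : (ENNReal.ofReal p).toReal⁻¹ - r.toReal⁻¹ = σ + γ := by
      rw [ENNReal.toReal_ofReal hp0.le]; exact hα
    have heq : (ENNReal.ofReal q).toReal⁻¹ - r.toReal⁻¹ = γ := by
      rw [ENNReal.toReal_ofReal hq0.le]
    rw [← hρdef] at hep heq
    simp only [lorentzNorm, if_neg hri, hep, heq, ← hρdef]
    -- measurability of the RHS integrand
    have hFmeas : Measurable fun u : ℝ =>
        (ENNReal.ofReal (u ^ γ) * rearrangement (volume : Measure E) f u) ^ ρ := by
      apply Measurable.pow_const
      exact ((measurable_id.pow_const γ).ennreal_ofReal).mul (rearr_anti volume f).measurable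
    set I := ∫⁻ u in Ioi (0:ℝ),
        (ENNReal.ofReal (u ^ γ) * rearrangement (volume : Measure E) f u) ^ ρ with hIdef
    have hJ : (∫⁻ t in Ioi (0:ℝ),
        (ENNReal.ofReal (t ^ (σ + γ)) *
          rearrangement (volume : Measure E) (fun x => f x / ((‖x‖ ^ s : ℝ) : ℂ)) t) ^ ρ)
        ≤ C₀ ^ ρ * (2 * I) := by
      calc ∫⁻ t in Ioi (0:ℝ), (ENNReal.ofReal (t ^ (σ + γ)) *
            rearrangement (volume : Measure E) (fun x => f x / ((‖x‖ ^ s : ℝ) : ℂ)) t) ^ ρ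
          ≤ ∫⁻ t in Ioi (0:ℝ), C₀ ^ ρ * ((ENNReal.ofReal ((t/2) ^ γ) *
              rearrangement (volume : Measure E) f (t/2)) ^ ρ) := by
            apply setLIntegral_mono' measurableSet_Ioi
            intro t ht
            rw [← ENNReal.mul_rpow_of_nonneg _ _ hρ0.le]
            exact ENNReal.rpow_le_rpow (hpoint t (mem_Ioi.1 ht)) hρ0.le
        _ = C₀ ^ ρ * ∫⁻ t in Ioi (0:ℝ), ((ENNReal.ofReal ((t/2) ^ γ) *
              rearrangement (volume : Measure E) f (t/2)) ^ ρ) :=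
            lintegral_const_mul' _ _ (ENNReal.rpow_ne_top_of_nonneg hρ0.le hC₀T)
        _ = C₀ ^ ρ * (2 * I) := by
            rw [hIdef, ← lintegral_Ioi_half _ hFmeas]
    calc (∫⁻ t in Ioi (0:ℝ),
        (ENNReal.ofReal (t ^ (σ + γ)) *
          rearrangement (volume : Measure E) (fun x => f x / ((‖x‖ ^ s : ℝ) : ℂ)) t) ^ ρ) ^ ρ⁻¹
        ≤ (C₀ ^ ρ * (2 * I)) ^ ρ⁻¹ := ENNReal.rpow_le_rpow hJ (inv_nonneg.2 hρ0.le)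
      _ = C₀ * (2:ℝ≥0∞) ^ ρ⁻¹ * I ^ ρ⁻¹ := by
          rw [ENNReal.mul_rpow_of_nonneg _ _ (inv_nonneg.2 hρ0.le),
            ENNReal.mul_rpow_of_nonneg _ _ (inv_nonneg.2 hρ0.le),
            ← ENNReal.rpow_mul, mul_inv_cancel₀ hρ0.ne', ENNReal.rpow_one, mul_assoc,
            hC₀def]
          ring
end
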